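/- For any clause configuration C and any term T implying C (T ⊨ C) that is minimal with this property, the number of literals in T is at most |C| (at most one literal per clause of C is needed); hence the clause space of C is at least the size of any minimal implying term. -/

import Mathlib

/-- A literal over Boolean variables of type `X`: a variable together with a sign. -/
abbrev Lit (X : Type) := X × Bool

/-- A clause: a finite set of literals, interpreted disjunctively. -/
abbrev Clause (X : Type) := Finset (Lit X)

/-- A configuration: a finite set of clauses, interpreted conjunctively. -/
abbrev Config (X : Type) := Finset (Clause X)

/-- The negation of a literal. -/
def negLit {X : Type} (l : Lit X) : Lit X := (l.1, !l.2)

/-- A clause (or term) is trivial if it contains both a variable and its negation. -/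
def IsTrivialClause {X : Type} (C : Clause X) : Prop :=
  ∃ v : X, (v, true) ∈ C ∧ (v, false) ∈ C

/-- A total assignment satisfies a literal. -/
def SatLit {X : Type} (α : X → Bool) (l : Lit X) : Prop := α l.1 = l.2

/-- A total assignment satisfies a clause (some literal is true). -/
def SatClause {X : Type} (α : X → Bool) (C : Clause X) : Prop := ∃ l ∈ C, SatLit α l

/-- A total assignment satisfies a term (all literals are true). -/
def SatTerm {X : Type} (α : X → Bool) (T : Finset (Lit X)) : Prop := ∀ l ∈ T, SatLit α l

/-- A total assignment satisfies a configuration (all clauses are true). -/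
def SatConfig {X : Type} (α : X → Bool) (𝒞 : Config X) : Prop := ∀ C ∈ 𝒞, SatClause α C

/-- The term `¬E` negating a clause `E`. -/
def negTerm {X : Type} [DecidableEq X] (E : Clause X) : Finset (Lit X) := E.image negLit

/-- if `T` is a non-trivial term implying the configuration `𝒞`
(consisting of non-trivial clauses) and `T` is minimal with this property, then
`T` has at most `|𝒞|` literals (at most one literal per clause of `𝒞` is needed);
hence the clause space of `𝒞` is at least the size of any minimal implying term. -/
theorem minimal_implying_term_small {X : Type} [DecidableEq X]
    (𝒞 : Config X) (h𝒞 : ∀ C ∈ 𝒞, ¬ IsTrivialClause C)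
    (T : Finset (Lit X)) (hT : ¬ IsTrivialClause T)
    (himp : ∀ α : X → Bool, SatTerm α T → SatConfig α 𝒞)
    (hmin : ∀ T' ⊂ T, ¬ ∀ α : X → Bool, SatTerm α T' → SatConfig α 𝒞) :
    T.card ≤ 𝒞.card := by
  classical
  have key : ∀ l ∈ T, ∃ C ∈ 𝒞, l ∈ C ∧
      ∃ α : X → Bool, SatTerm α (T.erase l) ∧ ¬ SatClause α C := by
    intro l hl
    have hss : T.erase l ⊂ T := Finset.erase_ssubset hl
    have h1 := hmin _ hss
    push_neg at h1
    obtain ⟨α, hαT, hαC⟩ := h1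
    unfold SatConfig at hαC
    push_neg at hαC
    obtain ⟨C, hC, hCfalse⟩ := hαC
    -- modified assignment
    set α' : X → Bool := fun x => if x = l.1 then l.2 else α x with hα'
    have hα'T : SatTerm α' T := by
      intro m hm
      by_cases h : m.1 = l.1
      · have hm2 : m.2 = l.2 := by
          by_contra hne
          apply hT
          have : m = (l.1, !l.2) := by
            rw [Prod.ext_iff]
            exact ⟨h, by revert hne; cases hb : m.2 <;> cases hb' : l.2 <;> simp⟩
          cases hl2 : l.2
          · exact ⟨l.1, by rw [this] at hm; simpa [hl2] using hm,
              by have := hl; cases l; simp_all⟩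
          · exact ⟨l.1, by have := hl; cases l; simp_all,
              by rw [this] at hm; simpa [hl2] using hm⟩
        simp [SatLit, hα', h, hm2]
      · have hmem : m ∈ T.erase l := by
          refine Finset.mem_erase.mpr ⟨?_, hm⟩
          intro he; exact h (by rw [he])
        have := hαT m hmem
        simpa [SatLit, hα', h] using this
    have hsat : SatClause α' C := himp α' hα'T C hC
    obtain ⟨m, hmC, hml⟩ := hsat
    have hm1 : m.1 = l.1 := by
      by_contra h
      exact hCfalse ⟨m, hmC, by simpa [SatLit, hα', h] using hml⟩
    have hm : m = l := by
      have : m.2 = l.2 := by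
        have := hml
        simp [SatLit, hα', hm1] at this
        exact this.symm
      cases m; cases l; simp_all
    exact ⟨C, hC, hm ▸ hmC, α, hαT, hCfalse⟩
  choose f hf𝒞 hfmem α hα hαf using key
  apply Finset.card_le_card_of_injOn (fun l => if h : l ∈ T then f l h else ∅)
  · intro l hl; simp [Finset.mem_coe.mp hl, hf𝒞 l hl]
  · intro l hl l' hl' heq
    simp only [Finset.mem_coe] at hl hl'
    simp only [hl, hl', dif_pos] at heq
    by_contra hne
    apply hαf l hl
    refine ⟨l', heq ▸ hfmem l' hl', ?_⟩
    exact hα l hl l' (Finset.mem_erase.mpr ⟨fun h => hne (h ▸ rfl), hl'⟩)
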